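/- Let M be symmetric positive definite, S^+ = ½(−M + √(M²+4M)), and P = (I + M + S^+)^{-1}. Then there exists κ₀ ∈ (0,1) such that for all x ∈ ℝ^d, xᵀ Pᵀ S^+ P x ≤ κ₀² xᵀ S^+ x. -/

import Mathlib

open Matrix

/-- The square root of a positive semidefinite matrix, as defined in Mathlib (Dec 2024);
removed from current Mathlib, restored here verbatim. -/
noncomputable def Matrix.PosSemidef.sqrt {n : Type*} [Fintype n] {𝕜 : Type*} [RCLike 𝕜]
    [PartialOrder 𝕜] [DecidableEq n] {A : Matrix n n 𝕜} (hA : A.PosSemidef) : Matrix n n 𝕜 :=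
  hA.1.eigenvectorUnitary.1 * diagonal ((↑) ∘ (√·) ∘ hA.1.eigenvalues) *
    (star hA.1.eigenvectorUnitary : Matrix n n 𝕜)

open scoped MatrixOrder in
lemma stmt3_eq_sqrt_aux {d : ℕ} {A B : Matrix (Fin d) (Fin d) ℝ} (hA : A.PosSemidef)
    (hB : B.PosSemidef) (h : A ^ 2 = B) : A = hB.sqrt := by
  have h1 : hB.sqrt = cfc Real.sqrt B := by
    rw [hB.1.cfc_eq]
    simp [Matrix.PosSemidef.sqrt, IsHermitian.cfc, Unitary.conjStarAlgAut_apply]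
  rw [h1, ← cfcₙ_eq_cfc, ← CFC.sqrt_eq_real_sqrt B hB.nonneg, ← h, pow_two,
    CFC.sqrt_mul_self A hA.nonneg]

theorem stmt3 {d : ℕ} (M : Matrix (Fin d) (Fin d) ℝ)
    (hM : M.PosDef)
    (hP : (M ^ 2 + (4 : ℝ) • M).PosSemidef) :
    let Sp := (1/2 : ℝ) • (-M + hP.sqrt)
    let P := (1 + M + Sp)⁻¹
    ∃ κ₀ : ℝ, 0 < κ₀ ∧ κ₀ < 1 ∧ ∀ x : Fin d → ℝ,
      x ⬝ᵥ (Pᵀ * Sp * P).mulVec x ≤ κ₀ ^ 2 * (x ⬝ᵥ Sp.mulVec x) := by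
  intro Sp P
  rcases Nat.eq_zero_or_pos d with hd | hd
  · subst hd
    exact ⟨1/2, by norm_num, by norm_num, fun x => by simp [dotProduct]⟩
  have hH : M.IsHermitian := hM.1
  set U : Matrix (Fin d) (Fin d) ℝ := (hH.eigenvectorUnitary : Matrix (Fin d) (Fin d) ℝ) with hU
  set ev : Fin d → ℝ := hH.eigenvalues with hev
  have hevpos : ∀ i, 0 < ev i := fun i => hM.eigenvalues_pos i
  have hUU : U * star U = 1 := (Matrix.mem_unitaryGroup_iff).mp hH.eigenvectorUnitary.2
  have hUU' : star U * U = 1 := (Matrix.mem_unitaryGroup_iff').mp hH.eigenvectorUnitary.2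
  set F : (ℝ → ℝ) → Matrix (Fin d) (Fin d) ℝ :=
    fun f => U * diagonal (f ∘ ev) * star U with hF
  have hFcongr : ∀ f g : ℝ → ℝ, (∀ i, f (ev i) = g (ev i)) → F f = F g := by
    intro f g h
    have hfg : f ∘ ev = g ∘ ev := funext h
    simp only [hF, hfg]
  have hFmul : ∀ f g, F f * F g = F (fun t => f t * g t) := by
    intro f g
    simp only [hF, Matrix.mul_assoc]
    rw [← Matrix.mul_assoc (star U) U, hUU', one_mul,
      ← Matrix.mul_assoc (diagonal (f ∘ ev)) (diagonal (g ∘ ev)), diagonal_mul_diagonal]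
    rfl
  have hFM : F (fun t => t) = M := by
    have := hH.spectral_theorem
    rw [Unitary.conjStarAlgAut_apply] at this
    rw [hF]
    convert this.symm using 2
    funext t; simp
  have hFone : F (fun _ => 1) = 1 := by
    simp only [hF]
    have : (fun (_ : ℝ) => (1:ℝ)) ∘ ev = fun _ => 1 := rfl
    rw [this, diagonal_one, Matrix.mul_one, hUU]
  have hFadd : ∀ f g, F (fun t => f t + g t) = F f + F g := by
    intro f g
    simp only [hF]
    have : ((fun t => f t + g t) ∘ ev) = fun i => (f ∘ ev) i + (g ∘ ev) i := rfl
    rw [this, ← diagonal_add, Matrix.mul_add, Matrix.add_mul]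
  have hFsmul : ∀ (c : ℝ) f, F (fun t => c * f t) = c • F f := by
    intro c f
    simp only [hF]
    have : ((fun t => c * f t) ∘ ev) = c • (f ∘ ev) := rfl
    rw [this, diagonal_smul, Matrix.mul_smul, Matrix.smul_mul]
  have hFpsd : ∀ f : ℝ → ℝ, (∀ i, 0 ≤ f (ev i)) → (F f).PosSemidef := by
    intro f h
    simp only [hF, ← Matrix.star_eq_conjTranspose U] at *
    rw [Matrix.star_eq_conjTranspose]
    exact (posSemidef_diagonal_iff.mpr (fun i => h i)).mul_mul_conjTranspose_same U
  have hFsym : ∀ f : ℝ → ℝ, (F f)ᵀ = F f := by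
    intro f
    have : (F f).IsHermitian := by
      simp only [hF, ← Matrix.star_eq_conjTranspose]
      rw [Matrix.star_eq_conjTranspose]
      exact Matrix.isHermitian_mul_mul_conjTranspose U (isHermitian_diagonal _)
    rw [← Matrix.conjTranspose_eq_transpose_of_trivial]
    exact this
  have hQuad : ∀ (f : ℝ → ℝ) (x : Fin d → ℝ),
      x ⬝ᵥ (F f).mulVec x = ∑ i, f (ev i) * ((star U).mulVec x i)^2 := by
    intro f x
    have hstar : star U = Uᵀ := by
      rw [Matrix.star_eq_conjTranspose, Matrix.conjTranspose_eq_transpose_of_trivial]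
    simp only [hF, ← Matrix.mulVec_mulVec, Matrix.dotProduct_mulVec x U,
      ← Matrix.mulVec_transpose, ← hstar]
    simp [dotProduct, mulVec_diagonal]
    apply Finset.sum_congr rfl
    intro i _
    ring
  -- the scalar functions
  set s : ℝ → ℝ := fun t => (Real.sqrt (t^2 + 4*t) - t)/2 with hs
  set a : ℝ → ℝ := fun t => 1 + t + s t with ha
  have hsnn : ∀ i, 0 ≤ s (ev i) := by
    intro i
    have h1 : ev i ≤ Real.sqrt ((ev i)^2 + 4 * ev i) := by
      have := Real.sqrt_le_sqrt (by nlinarith [hevpos i] : (ev i)^2 ≤ (ev i)^2 + 4 * ev i)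
      rwa [Real.sqrt_sq (hevpos i).le] at this
    simp only [hs]
    linarith
  have hapos : ∀ i, 0 < a (ev i) := fun i => by
    have := hsnn i; have := hevpos i; simp only [ha]; linarith
  -- identification of sqrt
  have hsqrt : hP.sqrt = F (fun t => Real.sqrt (t^2 + 4*t)) := by
    symm
    apply stmt3_eq_sqrt_aux
      (hFpsd (fun t => Real.sqrt (t^2 + 4*t)) (fun i => Real.sqrt_nonneg _)) hP
    rw [pow_two, hFmul]
    have : F (fun t => Real.sqrt (t^2+4*t) * Real.sqrt (t^2+4*t)) = F (fun t => t * t + 4 * t) := by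
      apply hFcongr
      intro i
      rw [Real.mul_self_sqrt (by nlinarith [hevpos i] : (0:ℝ) ≤ (ev i)^2 + 4 * ev i)]
      ring
    rw [this, hFadd, hFsmul, ← hFmul, hFM, ← pow_two]
  have hSp : Sp = F s := by
    show (1/2 : ℝ) • (-M + hP.sqrt) = F s
    have : F s = (1/2 : ℝ) • F (fun t => Real.sqrt (t^2+4*t) + (-1) * t) := by
      rw [← hFsmul]
      apply hFcongr
      intro i
      simp only [hs]
      ring
    rw [this, hFadd, hFsmul, hFM, hsqrt]
    rw [neg_one_smul, add_comm (-M)]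
  have hAF : 1 + M + Sp = F a := by
    have : F a = F (fun _ => 1) + F (fun t => t) + F s := by
      rw [← hFadd, ← hFadd]
    rw [this, hFone, hFM, hSp]
  have hPF : P = F (fun t => (a t)⁻¹) := by
    show (1 + M + Sp)⁻¹ = _
    rw [hAF]
    apply Matrix.inv_eq_right_inv
    rw [hFmul, ← hFone]
    apply hFcongr
    intro i
    exact mul_inv_cancel₀ (hapos i).ne'
  have hPSP : Pᵀ * Sp * P = F (fun t => (a t)⁻¹ * s t * (a t)⁻¹) := by
    rw [hPF, hSp, hFsym, hFmul, hFmul]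
  -- choose κ₀
  haveI : Nonempty (Fin d) := ⟨⟨0, hd⟩⟩
  have hne : (Finset.univ : Finset (Fin d)).Nonempty := Finset.univ_nonempty
  set m : ℝ := Finset.univ.inf' hne ev with hm
  have hmpos : 0 < m := by
    rw [hm, Finset.lt_inf'_iff]
    exact fun i _ => hevpos i
  have hmle : ∀ i, m ≤ ev i := fun i => Finset.inf'_le ev (Finset.mem_univ i)
  refine ⟨1/(1+m), by positivity, ?_, ?_⟩
  · rw [div_lt_one (by linarith)]; linarith
  intro x
  rw [hPSP, hSp, hQuad, hQuad, Finset.mul_sum]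
  apply Finset.sum_le_sum
  intro i _
  set y := (star U).mulVec x i
  have hinv : (a (ev i))⁻¹ ≤ 1/(1+m) := by
    rw [one_div]
    apply inv_anti₀ (by linarith)
    have := hmle i; have := hsnn i
    simp only [ha]; linarith
  have hinvnn : 0 ≤ (a (ev i))⁻¹ := inv_nonneg.mpr (hapos i).le
  have hsq : (a (ev i))⁻¹ * (a (ev i))⁻¹ ≤ (1/(1+m)) * (1/(1+m)) :=
    mul_le_mul hinv hinv hinvnn (by positivity)
  have hynn : (0:ℝ) ≤ y^2 := sq_nonneg y
  have hsy : 0 ≤ s (ev i) * y^2 := mul_nonneg (hsnn i) hynn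
  calc (a (ev i))⁻¹ * s (ev i) * (a (ev i))⁻¹ * y ^ 2
      = (s (ev i) * y^2) * ((a (ev i))⁻¹ * (a (ev i))⁻¹) := by ring
    _ ≤ (s (ev i) * y^2) * ((1/(1+m)) * (1/(1+m))) := mul_le_mul_of_nonneg_left hsq hsy
    _ = (1/(1+m))^2 * (s (ev i) * y^2) := by ring
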